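/- Let μ ∈ L¹_loc(ℝⁿ) vanish outside a bounded set Ω, with ∫₀^∞ |{x ∈ ℝⁿ : |μ(x)| > t}|^{1/n} dt < ∞ (i.e. μ ∈ L(n,1)). Fix δ ∈ (0,1/4) and q ∈ (1,n), and for x₀ ∈ Ω and r > 0 define S_{r,δ,q}(x₀) := ∑_{j=0}^∞ δ^j r (⨍_{B_{δ^j r}(x₀)} |μ|^q dx)^{1/q}. Then there is a constant c = c(n,q,δ) such that sup_{x₀∈Ω} S_{r,δ,q}(x₀) ≤ c ∫₀^∞ |{x : |μ(x)| > t}|^{1/n} dt. -/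

import Mathlib

open MeasureTheory Set ENNReal Filter

lemma hardy_aux {α : Type*} [MeasurableSpace α] (ρ : Measure α) (f : α → ℝ)
    (hf : AEMeasurable f ρ) {q : ℝ} (hq : 1 < q) (h : ℝ → ℝ≥0∞)
    (hmeas : Measurable h) (hmono : Antitone h) (hfin : ∀ t, h t ≠ ∞)
    (hdom : ∀ t, 0 < t → ρ {x | t < |f x|} ≤ h t) :
    ∫⁻ x, ENNReal.ofReal (|f x| ^ q) ∂ρ ≤
      ENNReal.ofReal q * (∫⁻ t in Set.Ioi 0, h t ^ (1/q)) ^ q := by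
  have hq0 : (0:ℝ) < q := by linarith
  set A := ∫⁻ t in Set.Ioi 0, h t ^ (1/q) with hA
  have key := lintegral_rpow_eq_lintegral_meas_lt_mul ρ
      (f := fun x => |f x|) (Filter.Eventually.of_forall fun x => abs_nonneg _)
      (_root_.continuous_abs.measurable.comp_aemeasurable hf) hq0
  rw [key]
  refine mul_le_mul_right ?_ _
  -- goal : ∫⁻ t in Ioi 0, ρ {a | t < |f a|} * ofReal (t ^ (q-1)) ≤ A ^ q
  have hAt : ∀ t : ℝ, 0 < t → ENNReal.ofReal t * h t ^ (1/q) ≤ A := by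
    intro t ht
    have h1 : ENNReal.ofReal t * h t ^ (1/q) = ∫⁻ _ in Set.Ioo (0:ℝ) t, h t ^ (1/q) := by
      rw [setLIntegral_const, Real.volume_Ioo, sub_zero, mul_comm]
    rw [h1]
    refine le_trans (setLIntegral_mono (hmeas.pow_const _) ?_) (lintegral_mono_set Ioo_subset_Ioi_self)
    intro s hs
    exact ENNReal.rpow_le_rpow (hmono hs.2.le) (by positivity)
  have hpt : ∀ t ∈ Set.Ioi (0:ℝ),
      ρ {a | t < |f a|} * ENNReal.ofReal (t ^ (q-1)) ≤ A ^ (q - 1) * h t ^ (1/q) := by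
    intro t ht
    have ht : (0:ℝ) < t := ht
    rcases eq_or_ne (h t) 0 with h0 | h0
    · have hz : ρ {a | t < |f a|} = 0 := le_antisymm (h0 ▸ hdom t ht) (zero_le)
      rw [hz, zero_mul]
      exact zero_le
    · calc ρ {a | t < |f a|} * ENNReal.ofReal (t ^ (q-1))
          ≤ h t * (ENNReal.ofReal t) ^ (q-1) := by
            rw [ENNReal.ofReal_rpow_of_pos ht]
            exact mul_le_mul_left (hdom t ht) _
        _ = h t ^ (1/q) * (h t ^ ((q-1)/q) * (ENNReal.ofReal t) ^ (q-1)) := by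
            rw [← mul_assoc, ← ENNReal.rpow_add _ _ h0 (hfin t), ← add_div]
            have he : (1 + (q - 1))/q = 1 := by field_simp; ring
            rw [he, ENNReal.rpow_one]
        _ = h t ^ (1/q) * (h t ^ (1/q) * ENNReal.ofReal t) ^ (q-1) := by
            rw [ENNReal.mul_rpow_of_nonneg _ _ (by linarith : (0:ℝ) ≤ q - 1),
              ← ENNReal.rpow_mul]
            ring_nf
        _ ≤ h t ^ (1/q) * A ^ (q-1) := by
            refine mul_le_mul_right (ENNReal.rpow_le_rpow ?_ (by linarith)) _
            rw [mul_comm]; exact hAt t ht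
        _ = A ^ (q-1) * h t ^ (1/q) := mul_comm _ _
  calc ∫⁻ t in Set.Ioi 0, ρ {a | t < |f a|} * ENNReal.ofReal (t ^ (q-1))
      ≤ ∫⁻ t in Set.Ioi 0, A ^ (q-1) * h t ^ (1/q) := by
        exact setLIntegral_mono (by measurability) hpt
    _ = A ^ (q-1) * A := by rw [lintegral_const_mul _ (hmeas.pow_const _)]
    _ ≤ A ^ q := by
        rcases eq_or_ne A 0 with hA0 | hA0
        · rw [hA0, ENNReal.zero_rpow_of_pos (by linarith : (0:ℝ) < q - 1), zero_mul]
          exact zero_le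
        rcases eq_or_ne A ∞ with hAt' | hAt'
        · rw [hAt', ENNReal.top_rpow_of_pos hq0]
          exact le_top
        · have hst : A ^ (q-1) * A = A ^ ((q-1)+1) := by
            rw [ENNReal.rpow_add _ _ hA0 hAt', ENNReal.rpow_one]
          rw [hst]
          norm_num

noncomputable def aa (δ r : ℝ) (j : ℕ) : ℝ≥0∞ := ENNReal.ofReal (δ ^ j * r)

noncomputable def bb (δ r : ℝ) (n : ℕ) (ω : ℝ≥0∞) (j : ℕ) : ℝ≥0∞ := aa δ r j ^ n * ω

lemma seriesB {n : ℕ} (hn : 2 ≤ n) {q δ r : ℝ} (hq1 : 1 < q) (hqn : q < n)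
    (hδ0 : 0 < δ) (hδ1 : δ < 1) (hr : 0 < r) {ω : ℝ≥0∞} (hω0 : ω ≠ 0) (hωt : ω ≠ ∞)
    (x : ℝ≥0∞) :
    ∑' j : ℕ, aa δ r j * ((bb δ r n ω j)⁻¹) ^ (1/q) * (min x (bb δ r n ω j)) ^ (1/q)
      ≤ ((1 - ENNReal.ofReal δ)⁻¹ + (1 - ENNReal.ofReal (δ ^ ((n:ℝ)/q - 1)))⁻¹) *
          (ω⁻¹) ^ (1/(n:ℝ)) * x ^ (1/(n:ℝ)) := by
  classical
  have hq0 : (0:ℝ) < q := by linarith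
  have hn0 : (0:ℝ) < (n:ℝ) := by exact_mod_cast Nat.lt_of_lt_of_le (by norm_num) hn
  set E : ℝ := (n:ℝ)/q - 1 with hE
  have hE0 : 0 < E := by
    have : 1 < (n:ℝ)/q := (one_lt_div hq0).mpr hqn
    simp only [hE]; linarith
  have hρ : ∀ j : ℕ, (0:ℝ) < δ ^ j * r := fun j => by positivity
  have ha0 : ∀ j, aa δ r j ≠ 0 := fun j => (ENNReal.ofReal_pos.mpr (hρ j)).ne'
  have hat : ∀ j, aa δ r j ≠ ∞ := fun j => ENNReal.ofReal_ne_top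
  have hb0 : ∀ j, bb δ r n ω j ≠ 0 := fun j => mul_ne_zero (pow_ne_zero _ (ha0 j)) hω0
  have hbt : ∀ j, bb δ r n ω j ≠ ∞ :=
    fun j => ENNReal.mul_ne_top (ENNReal.pow_ne_top (hat j)) hωt
  have hbval : ∀ j, bb δ r n ω j = ENNReal.ofReal ((δ ^ j * r) ^ n) * ω := by
    intro j; rw [bb, aa, ENNReal.ofReal_pow (hρ j).le]
  rcases eq_or_ne x 0 with rfl | hx
  · have h0 : ∀ j:ℕ, aa δ r j * ((bb δ r n ω j)⁻¹) ^ (1/q) * (min 0 (bb δ r n ω j)) ^ (1/q)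
        = 0 := by
      intro j
      rw [min_eq_left (zero_le), ENNReal.zero_rpow_of_pos (by positivity), mul_zero]
    rw [tsum_congr h0, tsum_zero]
    exact zero_le
  -- x ≠ 0
  have hex : ∃ j, bb δ r n ω j ≤ x := by
    rcases eq_or_ne x ∞ with rfl | hxt
    · exact ⟨0, le_top⟩
    · have hxω : (0:ℝ≥0∞) < x / ω := ENNReal.div_pos hx hωt
      have : ∃ ε : ℝ, 0 < ε ∧ ENNReal.ofReal ε ≤ x / ω := by
        rcases eq_or_ne (x / ω) ∞ with h | h
        · exact ⟨1, one_pos, by simp [h]⟩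
        · exact ⟨(x/ω).toReal, ENNReal.toReal_pos hxω.ne' h, by
            rw [ENNReal.ofReal_toReal h]⟩
      obtain ⟨ε, hε0, hε⟩ := this
      have htend : Filter.Tendsto (fun j : ℕ => (δ ^ j * r) ^ n) atTop (nhds 0) := by
        have h1 : Filter.Tendsto (fun j : ℕ => δ ^ j * r) atTop (nhds 0) := by
          simpa using (tendsto_pow_atTop_nhds_zero_of_lt_one hδ0.le hδ1).mul_const r
        have := h1.pow n
        simpa [zero_pow (by omega : n ≠ 0)] using this
      obtain ⟨j, hj⟩ := (htend.eventually_lt_const hε0).exists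
      refine ⟨j, ?_⟩
      rw [hbval j]
      calc ENNReal.ofReal ((δ^j*r)^n) * ω ≤ (x/ω) * ω := by
            refine mul_le_mul_left (le_trans (ENNReal.ofReal_le_ofReal hj.le) hε) _
        _ = x := ENNReal.div_mul_cancel hω0 hωt
  set J := Nat.find hex with hJdef
  have hJ : bb δ r n ω J ≤ x := Nat.find_spec hex
  have hJlt : ∀ j, j < J → x < bb δ r n ω j := fun j hj => lt_of_not_ge (Nat.find_min hex hj)
  rw [← Summable.sum_add_tsum_nat_add' (k := J) ENNReal.summable]
  -- tail bound
  have Tle : ∀ j, aa δ r j * ((bb δ r n ω j)⁻¹) ^ (1/q) * (min x (bb δ r n ω j)) ^ (1/q)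
      ≤ aa δ r j := by
    intro j
    have h1 : ((bb δ r n ω j)⁻¹) ^ (1/q) * (min x (bb δ r n ω j)) ^ (1/q) ≤ 1 := by
      rw [← ENNReal.mul_rpow_of_nonneg _ _ (by positivity : (0:ℝ) ≤ 1/q)]
      have h2 : (bb δ r n ω j)⁻¹ * min x (bb δ r n ω j) ≤ 1 := by
        calc (bb δ r n ω j)⁻¹ * min x (bb δ r n ω j)
            ≤ (bb δ r n ω j)⁻¹ * bb δ r n ω j := mul_le_mul_right (min_le_right _ _) _
          _ = 1 := ENNReal.inv_mul_cancel (hb0 j) (hbt j)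
      calc _ ≤ (1:ℝ≥0∞) ^ (1/q) := ENNReal.rpow_le_rpow h2 (by positivity)
        _ = 1 := ENNReal.one_rpow _
    rw [mul_assoc]
    exact le_trans (mul_le_mul_right h1 _) (le_of_eq (mul_one _))
  have taille : (∑' i : ℕ, aa δ r (i + J) * ((bb δ r n ω (i + J))⁻¹) ^ (1/q) *
        (min x (bb δ r n ω (i + J))) ^ (1/q))
      ≤ (1 - ENNReal.ofReal δ)⁻¹ * ((ω⁻¹) ^ (1/(n:ℝ)) * x ^ (1/(n:ℝ))) := by
    have step1 : ∀ i : ℕ, aa δ r (i + J) = ENNReal.ofReal δ ^ i * aa δ r J := by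
      intro i
      rw [aa, aa, pow_add, mul_assoc, ENNReal.ofReal_mul (by positivity),
        ENNReal.ofReal_pow hδ0.le]
    calc (∑' i : ℕ, aa δ r (i + J) * ((bb δ r n ω (i + J))⁻¹) ^ (1/q) *
            (min x (bb δ r n ω (i + J))) ^ (1/q))
        ≤ ∑' i : ℕ, aa δ r (i + J) := ENNReal.tsum_le_tsum (fun i => Tle (i + J))
      _ = (∑' i : ℕ, ENNReal.ofReal δ ^ i) * aa δ r J := by
          rw [tsum_congr step1, ENNReal.tsum_mul_right]
      _ = (1 - ENNReal.ofReal δ)⁻¹ * aa δ r J := by rw [ENNReal.tsum_geometric]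
      _ ≤ (1 - ENNReal.ofReal δ)⁻¹ * ((ω⁻¹) ^ (1/(n:ℝ)) * x ^ (1/(n:ℝ))) := by
          refine mul_le_mul_right ?_ _
          have h1 : aa δ r J ^ n ≤ x * ω⁻¹ := by
            calc aa δ r J ^ n = aa δ r J ^ n * ω * ω⁻¹ := by
                  rw [mul_assoc, ENNReal.mul_inv_cancel hω0 hωt, mul_one]
              _ ≤ x * ω⁻¹ := mul_le_mul_left hJ _
          have h2 : aa δ r J = (aa δ r J ^ n) ^ (1/(n:ℝ)) := by
            rw [← ENNReal.rpow_natCast _ n, ← ENNReal.rpow_mul, mul_one_div,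
              div_self hn0.ne', ENNReal.rpow_one]
          rw [h2]
          calc (aa δ r J ^ n) ^ (1/(n:ℝ)) ≤ (x * ω⁻¹) ^ (1/(n:ℝ)) :=
                ENNReal.rpow_le_rpow h1 (by positivity)
            _ = x ^ (1/(n:ℝ)) * (ω⁻¹) ^ (1/(n:ℝ)) :=
                ENNReal.mul_rpow_of_nonneg _ _ (by positivity)
            _ = (ω⁻¹) ^ (1/(n:ℝ)) * x ^ (1/(n:ℝ)) := mul_comm _ _
  -- head bound
  have headle : (∑ j ∈ Finset.range J, aa δ r j * ((bb δ r n ω j)⁻¹) ^ (1/q) *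
        (min x (bb δ r n ω j)) ^ (1/q))
      ≤ (1 - ENNReal.ofReal (δ ^ E))⁻¹ * ((ω⁻¹) ^ (1/(n:ℝ)) * x ^ (1/(n:ℝ))) := by
    rcases Nat.eq_zero_or_pos J with hJ0 | hJpos
    · rw [hJ0]
      simp only [Finset.range_zero, Finset.sum_empty]
      exact zero_le
    set k := J - 1 with hk
    have hkJ : J = k + 1 := (Nat.succ_pred_eq_of_pos hJpos).symm
    have hxk : x < bb δ r n ω k := hJlt k (by omega)
    have hxt : x ≠ ∞ := (hxk.trans (lt_top_iff_ne_top.mpr (hbt k))).ne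
    have hωinv0 : ω⁻¹ ≠ 0 := ENNReal.inv_ne_zero.mpr hωt
    have hωinvt : ω⁻¹ ≠ ∞ := ENNReal.inv_ne_top.mpr hω0
    -- per-term bound
    have hterm : ∀ j, j < J →
        aa δ r j * ((bb δ r n ω j)⁻¹) ^ (1/q) * (min x (bb δ r n ω j)) ^ (1/q)
          ≤ ENNReal.ofReal (δ ^ E) ^ (k - j) *
              (ENNReal.ofReal ((δ ^ k * r) ^ (-E)) * ((ω⁻¹) ^ (1/q) * x ^ (1/q))) := by
      intro j hj
      have hjk : j ≤ k := by omega
      have step1 : aa δ r j * ((bb δ r n ω j)⁻¹) ^ (1/q) * (min x (bb δ r n ω j)) ^ (1/q)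
          ≤ aa δ r j * ((bb δ r n ω j)⁻¹) ^ (1/q) * x ^ (1/q) :=
        mul_le_mul_right (ENNReal.rpow_le_rpow (min_le_left _ _) (by positivity)) _
      have step2 : aa δ r j * ((bb δ r n ω j)⁻¹) ^ (1/q)
          = ENNReal.ofReal ((δ ^ j * r) ^ (-E)) * (ω⁻¹) ^ (1/q) := by
        rw [bb, ENNReal.mul_inv (Or.inl (pow_ne_zero _ (ha0 j)))
            (Or.inl (ENNReal.pow_ne_top (hat j))),
          ENNReal.mul_rpow_of_nonneg _ _ (by positivity : (0:ℝ) ≤ 1/q), ← mul_assoc]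
        congr 1
        -- aa j * ((aa j ^ n)⁻¹) ^ (1/q) = ofReal ((δ^j*r)^(-E))
        rw [aa, ← ENNReal.ofReal_pow (hρ j).le,
          ← ENNReal.ofReal_inv_of_pos (by positivity),
          ENNReal.ofReal_rpow_of_pos (by positivity),
          ← ENNReal.ofReal_mul (hρ j).le]
        congr 1
        -- real identity
        have h1 : (((δ ^ j * r) ^ n)⁻¹ : ℝ) = (δ ^ j * r) ^ (-(n:ℝ)) := by
          rw [← Real.rpow_natCast (δ ^ j * r) n, ← Real.rpow_neg (hρ j).le]
        rw [h1, ← Real.rpow_mul (hρ j).le]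
        nth_rewrite 1 [← Real.rpow_one (δ ^ j * r)]
        rw [← Real.rpow_add (hρ j)]
        congr 1
        simp only [hE]
        ring
      have step3 : ENNReal.ofReal ((δ ^ j * r) ^ (-E))
          = ENNReal.ofReal (δ ^ E) ^ (k - j) * ENNReal.ofReal ((δ ^ k * r) ^ (-E)) := by
        rw [← ENNReal.ofReal_pow (by positivity), ← ENNReal.ofReal_mul (by positivity)]
        congr 1
        have hsplit : δ ^ k * r = δ ^ (k - j) * (δ ^ j * r) := by
          rw [← mul_assoc, ← pow_add]
          congr 2
          omega
        have cast1 : ((δ:ℝ) ^ E) ^ ((k - j : ℕ)) = δ ^ (E * ((k:ℝ) - (j:ℝ))) := by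
          rw [← Real.rpow_natCast (δ ^ E) (k - j), ← Real.rpow_mul hδ0.le]
          congr 1
          rw [Nat.cast_sub hjk]
        have key : ∀ m : ℕ, ((δ : ℝ) ^ m * r) ^ (-E) = δ ^ (-(m:ℝ) * E) * r ^ (-E) := by
          intro m
          rw [Real.mul_rpow (by positivity) (by positivity), ← Real.rpow_natCast δ m,
            ← Real.rpow_mul hδ0.le]
          rw [show ((m:ℝ)) * (-E) = -(m:ℝ) * E by ring]
        rw [key j, key k, cast1, ← mul_assoc, ← Real.rpow_add hδ0]
        rw [show E * ((k:ℝ) - (j:ℝ)) + -(k:ℝ) * E = -(j:ℝ) * E by ring]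
      calc aa δ r j * ((bb δ r n ω j)⁻¹) ^ (1/q) * (min x (bb δ r n ω j)) ^ (1/q)
          ≤ aa δ r j * ((bb δ r n ω j)⁻¹) ^ (1/q) * x ^ (1/q) := step1
        _ = ENNReal.ofReal ((δ ^ j * r) ^ (-E)) * (ω⁻¹) ^ (1/q) * x ^ (1/q) := by
            rw [step2]
        _ = ENNReal.ofReal (δ ^ E) ^ (k - j) *
              (ENNReal.ofReal ((δ ^ k * r) ^ (-E)) * ((ω⁻¹) ^ (1/q) * x ^ (1/q))) := by
            rw [step3]; ring
    calc (∑ j ∈ Finset.range J, aa δ r j * ((bb δ r n ω j)⁻¹) ^ (1/q) *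
            (min x (bb δ r n ω j)) ^ (1/q))
        ≤ ∑ j ∈ Finset.range J, ENNReal.ofReal (δ ^ E) ^ (k - j) *
            (ENNReal.ofReal ((δ ^ k * r) ^ (-E)) * ((ω⁻¹) ^ (1/q) * x ^ (1/q))) :=
          Finset.sum_le_sum (fun j hj => hterm j (Finset.mem_range.mp hj))
      _ = (∑ j ∈ Finset.range J, ENNReal.ofReal (δ ^ E) ^ (k - j)) *
            (ENNReal.ofReal ((δ ^ k * r) ^ (-E)) * ((ω⁻¹) ^ (1/q) * x ^ (1/q))) := by
          rw [Finset.sum_mul]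
      _ ≤ (1 - ENNReal.ofReal (δ ^ E))⁻¹ *
            (ENNReal.ofReal ((δ ^ k * r) ^ (-E)) * ((ω⁻¹) ^ (1/q) * x ^ (1/q))) := by
          refine mul_le_mul_left ?_ _
          have hrefl : (∑ j ∈ Finset.range J, ENNReal.ofReal (δ ^ E) ^ (k - j))
              = ∑ i ∈ Finset.range J, ENNReal.ofReal (δ ^ E) ^ i := by
            rw [hkJ]
            exact Finset.sum_range_reflect (fun i => ENNReal.ofReal (δ ^ E) ^ i) (k + 1)
          rw [hrefl]
          calc (∑ i ∈ Finset.range J, ENNReal.ofReal (δ ^ E) ^ i)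
              ≤ ∑' i : ℕ, ENNReal.ofReal (δ ^ E) ^ i := ENNReal.sum_le_tsum _
            _ = (1 - ENNReal.ofReal (δ ^ E))⁻¹ := ENNReal.tsum_geometric _
      _ ≤ (1 - ENNReal.ofReal (δ ^ E))⁻¹ * ((ω⁻¹) ^ (1/(n:ℝ)) * x ^ (1/(n:ℝ))) := by
          refine mul_le_mul_right ?_ _
          -- Cst bound
          have h1 : x * ω⁻¹ ≤ ENNReal.ofReal ((δ ^ k * r) ^ n) := by
            have hxle : x ≤ ENNReal.ofReal ((δ ^ k * r) ^ n) * ω := by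
              rw [← hbval k]; exact hxk.le
            calc x * ω⁻¹ ≤ ENNReal.ofReal ((δ ^ k * r) ^ n) * ω * ω⁻¹ :=
                  mul_le_mul_left hxle _
              _ = ENNReal.ofReal ((δ ^ k * r) ^ n) := by
                  rw [mul_assoc, ENNReal.mul_inv_cancel hω0 hωt, mul_one]
          have h2 : (x * ω⁻¹) ^ (E/(n:ℝ)) ≤ ENNReal.ofReal ((δ ^ k * r) ^ E) := by
            calc (x * ω⁻¹) ^ (E/(n:ℝ)) ≤ (ENNReal.ofReal ((δ ^ k * r) ^ n)) ^ (E/(n:ℝ)) :=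
                  ENNReal.rpow_le_rpow h1 (by positivity)
              _ = ENNReal.ofReal (((δ ^ k * r) ^ n) ^ (E/(n:ℝ))) :=
                  ENNReal.ofReal_rpow_of_pos (by positivity)
              _ = ENNReal.ofReal ((δ ^ k * r) ^ E) := by
                  congr 1
                  rw [← Real.rpow_natCast (δ ^ k * r) n, ← Real.rpow_mul (hρ k).le]
                  congr 1
                  field_simp
          have h3 : ENNReal.ofReal ((δ ^ k * r) ^ (-E)) ≤ ((x * ω⁻¹) ^ (E/(n:ℝ)))⁻¹ := by
            rw [Real.rpow_neg (hρ k).le, ENNReal.ofReal_inv_of_pos (by positivity)]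
            exact ENNReal.inv_le_inv' h2
          have h4 : ((x * ω⁻¹) ^ (E/(n:ℝ)))⁻¹ * ((ω⁻¹) ^ (1/q) * x ^ (1/q))
              = (ω⁻¹) ^ (1/(n:ℝ)) * x ^ (1/(n:ℝ)) := by
            rw [ENNReal.mul_rpow_of_ne_zero hx hωinv0,
              ENNReal.mul_inv
                (Or.inl (ENNReal.rpow_pos (lt_of_le_of_ne (zero_le) (Ne.symm hx)) hxt).ne')
                (Or.inl (ENNReal.rpow_ne_top_of_nonneg (by positivity) hxt)),
              ← ENNReal.rpow_neg, ← ENNReal.rpow_neg]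
            rw [show x ^ (-(E/(n:ℝ))) * (ω⁻¹) ^ (-(E/(n:ℝ))) * ((ω⁻¹) ^ (1/q) * x ^ (1/q))
                = (x ^ (-(E/(n:ℝ))) * x ^ (1/q)) * ((ω⁻¹) ^ (-(E/(n:ℝ))) * (ω⁻¹) ^ (1/q))
              from by ring]
            rw [← ENNReal.rpow_add _ _ hx hxt, ← ENNReal.rpow_add _ _ hωinv0 hωinvt]
            have he1 : -(E/(n:ℝ)) + 1/q = 1/(n:ℝ) := by
              simp only [hE]
              field_simp
              ring
            rw [he1, mul_comm]
          calc ENNReal.ofReal ((δ ^ k * r) ^ (-E)) * ((ω⁻¹) ^ (1/q) * x ^ (1/q))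
              ≤ ((x * ω⁻¹) ^ (E/(n:ℝ)))⁻¹ * ((ω⁻¹) ^ (1/q) * x ^ (1/q)) :=
                mul_le_mul_left h3 _
            _ = (ω⁻¹) ^ (1/(n:ℝ)) * x ^ (1/(n:ℝ)) := h4
  refine le_trans (add_le_add headle taille) (le_of_eq ?_)
  ring

theorem lorentz_series_bound (n : ℕ) (hn : 2 ≤ n) (q δ : ℝ)
    (hq : q ∈ Set.Ioo (1:ℝ) (n:ℝ)) (hδ : δ ∈ Set.Ioo (0:ℝ) (1/4)) :
    ∃ c : ℝ, 0 < c ∧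
      ∀ (Ω : Set (EuclideanSpace ℝ (Fin n))) (μ : EuclideanSpace ℝ (Fin n) → ℝ),
        Bornology.IsBounded Ω →
        LocallyIntegrable μ volume →
        (∀ x, x ∉ Ω → μ x = 0) →
        IntegrableOn
          (fun t : ℝ => (volume {x | t < |μ x|}).toReal ^ (1/(n:ℝ))) (Set.Ioi 0) →
        ∀ x₀ ∈ Ω, ∀ r : ℝ, 0 < r →
          ∑' j : ℕ, δ ^ j * r *
              (⨍ x in Metric.ball x₀ (δ ^ j * r), |μ x| ^ q) ^ (1/q)
            ≤ c * ∫ t in Set.Ioi (0:ℝ), (volume {x | t < |μ x|}).toReal ^ (1/(n:ℝ)) := by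
  obtain ⟨hq1, hqn⟩ := hq
  obtain ⟨hδ0, hδ1'⟩ := hδ
  have hδ1 : δ < 1 := lt_trans hδ1' (by norm_num)
  have hq0 : (0:ℝ) < q := by linarith
  have hn0 : (0:ℝ) < (n:ℝ) := by linarith
  have hE0 : 0 < (n:ℝ)/q - 1 := by
    have : 1 < (n:ℝ)/q := (one_lt_div hq0).mpr hqn
    linarith
  set ω := volume (Metric.ball (0 : EuclideanSpace ℝ (Fin n)) 1) with hωdef
  have hω0 : ω ≠ 0 := (Metric.measure_ball_pos _ _ one_pos).ne'
  have hωt : ω ≠ ∞ := measure_ball_lt_top.ne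
  set C : ℝ≥0∞ := (1 - ENNReal.ofReal δ)⁻¹ + (1 - ENNReal.ofReal (δ ^ ((n:ℝ)/q - 1)))⁻¹
    with hCdef
  have hC0 : C ≠ 0 := by
    have h1 : (0:ℝ≥0∞) < (1 - ENNReal.ofReal δ)⁻¹ :=
      ENNReal.inv_pos.mpr ((tsub_le_self.trans_lt ENNReal.one_lt_top).ne)
    exact (h1.trans_le le_self_add).ne'
  have hCt : C ≠ ∞ := by
    refine ENNReal.add_ne_top.mpr ⟨?_, ?_⟩
    · rw [ENNReal.inv_ne_top]
      rw [Ne, tsub_eq_zero_iff_le, not_le]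
      exact ENNReal.ofReal_lt_one.mpr hδ1
    · rw [ENNReal.inv_ne_top]
      rw [Ne, tsub_eq_zero_iff_le, not_le]
      exact ENNReal.ofReal_lt_one.mpr (Real.rpow_lt_one hδ0.le hδ1 hE0)
  have hW0 : (ω⁻¹) ^ (1/(n:ℝ)) ≠ 0 :=
    (ENNReal.rpow_pos (ENNReal.inv_pos.mpr hωt) (ENNReal.inv_ne_top.mpr hω0)).ne'
  have hWt : (ω⁻¹) ^ (1/(n:ℝ)) ≠ ∞ :=
    ENNReal.rpow_ne_top_of_nonneg (by positivity) (ENNReal.inv_ne_top.mpr hω0)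
  have hQ0 : (ENNReal.ofReal q) ^ (1/q) ≠ 0 :=
    (ENNReal.rpow_pos (ENNReal.ofReal_pos.mpr hq0) ENNReal.ofReal_ne_top).ne'
  have hQt : (ENNReal.ofReal q) ^ (1/q) ≠ ∞ :=
    ENNReal.rpow_ne_top_of_nonneg (by positivity) ENNReal.ofReal_ne_top
  set K : ℝ≥0∞ := (ENNReal.ofReal q) ^ (1/q) * (C * (ω⁻¹) ^ (1/(n:ℝ))) with hKdef
  have hK0 : K ≠ 0 := by
    simp only [hKdef]
    exact mul_ne_zero hQ0 (mul_ne_zero hC0 hW0)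
  have hKt : K ≠ ∞ := by
    simp only [hKdef]
    exact ENNReal.mul_ne_top hQt (ENNReal.mul_ne_top hCt hWt)
  refine ⟨K.toReal, ENNReal.toReal_pos hK0 hKt, ?_⟩
  intro Ω μ hΩ hloc hvanish hint x₀ hx₀ r hr
  -- distribution function
  set m : ℝ → ℝ≥0∞ := fun t => volume {x : EuclideanSpace ℝ (Fin n) | t < |μ x|} with hmdef
  have hm_anti : Antitone m := fun s t hst =>
    measure_mono (fun x hx => lt_of_le_of_lt hst hx)
  have hm_meas : Measurable m := hm_anti.measurable
  have hm_fin : ∀ t : ℝ, 0 < t → m t ≠ ∞ := by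
    intro t ht
    have hsub : {x : EuclideanSpace ℝ (Fin n) | t < |μ x|} ⊆ Ω := by
      intro x hx
      by_contra hxΩ
      rw [Set.mem_setOf_eq, hvanish x hxΩ, abs_zero] at hx
      linarith
    exact ((measure_mono hsub).trans_lt hΩ.measure_lt_top).ne
  set I : ℝ≥0∞ := ∫⁻ t in Set.Ioi (0:ℝ), m t ^ (1/(n:ℝ)) with hIdef
  have hIval : I = ENNReal.ofReal
      (∫ t in Set.Ioi (0:ℝ), (m t).toReal ^ (1/(n:ℝ))) := by
    rw [MeasureTheory.ofReal_integral_eq_lintegral_ofReal hint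
      (Filter.Eventually.of_forall fun t => by positivity)]
    refine setLIntegral_congr_fun measurableSet_Ioi
      (fun t ht => ?_)
    rw [← ENNReal.ofReal_rpow_of_nonneg ENNReal.toReal_nonneg (by positivity),
      ENNReal.ofReal_toReal (hm_fin t ht)]
  have hIt : I ≠ ∞ := by rw [hIval]; exact ENNReal.ofReal_ne_top
  -- balls
  have hρ : ∀ j : ℕ, (0:ℝ) < δ ^ j * r := fun j => by positivity
  set B : ℕ → Set (EuclideanSpace ℝ (Fin n)) := fun j => Metric.ball x₀ (δ ^ j * r)
    with hBdef
  have hbmeasure : ∀ j, volume (B j) = bb δ r n ω j := by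
    intro j
    rw [hBdef]
    rw [MeasureTheory.Measure.addHaar_ball_of_pos volume x₀ (hρ j),
      finrank_euclideanSpace_fin]
    rw [bb, aa, ENNReal.ofReal_pow (hρ j).le]
  have ha0 : ∀ j, aa δ r j ≠ 0 := fun j => (ENNReal.ofReal_pos.mpr (hρ j)).ne'
  have hat : ∀ j, aa δ r j ≠ ∞ := fun j => ENNReal.ofReal_ne_top
  have hb0 : ∀ j, bb δ r n ω j ≠ 0 := fun j => mul_ne_zero (pow_ne_zero _ (ha0 j)) hω0
  have hbt : ∀ j, bb δ r n ω j ≠ ∞ :=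
    fun j => ENNReal.mul_ne_top (ENNReal.pow_ne_top (hat j)) hωt
  -- Hardy bound on each ball
  set A : ℕ → ℝ≥0∞ :=
    fun j => ∫⁻ t in Set.Ioi (0:ℝ), (min (m t) (bb δ r n ω j)) ^ (1/q) with hAdef
  set L : ℕ → ℝ≥0∞ := fun j => ∫⁻ x in B j, ENNReal.ofReal (|μ x| ^ q) with hLdef
  have hmin_meas : ∀ j, Measurable (fun t => min (m t) (bb δ r n ω j)) :=
    fun j => hm_meas.min measurable_const
  have hhard : ∀ j, L j ≤ ENNReal.ofReal q * (A j) ^ q := by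
    intro j
    refine hardy_aux (volume.restrict (B j)) μ
      (hloc.aestronglyMeasurable.aemeasurable.restrict) hq1 _
      (hmin_meas j)
      (fun s t hst => min_le_min (hm_anti hst) le_rfl)
      (fun t => ne_top_of_le_ne_top (hbt j) (min_le_right _ _))
      (fun t ht => ?_)
    refine le_min ?_ ?_
    · exact Measure.restrict_apply_le _ _
    · calc volume.restrict (B j) {x | t < |μ x|}
          ≤ volume.restrict (B j) Set.univ := measure_mono (Set.subset_univ _)
        _ = volume (B j) := by rw [Measure.restrict_apply_univ]
        _ = bb δ r n ω j := hbmeasure j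
  -- finiteness of A
  have hq_le : 1/(n:ℝ) ≤ 1/q := by
    apply one_div_le_one_div_of_le hq0 hqn.le
  have hA_le : ∀ j, A j ≤ (bb δ r n ω j) ^ (1/q - 1/(n:ℝ)) * I := by
    intro j
    have hpt : ∀ t : ℝ, (min (m t) (bb δ r n ω j)) ^ (1/q)
        ≤ (bb δ r n ω j) ^ (1/q - 1/(n:ℝ)) * m t ^ (1/(n:ℝ)) := by
      intro t
      rcases eq_or_ne (min (m t) (bb δ r n ω j)) 0 with h0 | h0
      · rw [h0, ENNReal.zero_rpow_of_pos (by positivity)]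
        exact zero_le
      · have hsplit : (min (m t) (bb δ r n ω j)) ^ (1/q)
            = (min (m t) (bb δ r n ω j)) ^ (1/q - 1/(n:ℝ)) *
              (min (m t) (bb δ r n ω j)) ^ (1/(n:ℝ)) := by
          rw [← ENNReal.rpow_add _ _ h0 (ne_top_of_le_ne_top (hbt j) (min_le_right _ _))]
          congr 1
          ring
        rw [hsplit]
        exact mul_le_mul'
          (ENNReal.rpow_le_rpow (min_le_right _ _) (by linarith))
          (ENNReal.rpow_le_rpow (min_le_left _ _) (by positivity))
    calc A j ≤ ∫⁻ t in Set.Ioi (0:ℝ),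
          (bb δ r n ω j) ^ (1/q - 1/(n:ℝ)) * m t ^ (1/(n:ℝ)) :=
        lintegral_mono fun t => hpt t
      _ = (bb δ r n ω j) ^ (1/q - 1/(n:ℝ)) * I := by
        rw [lintegral_const_mul' _ _
          (ENNReal.rpow_ne_top_of_nonneg (by linarith) (hbt j))]
  have hA_fin : ∀ j, A j ≠ ∞ := by
    intro j
    exact ne_top_of_le_ne_top
      (ENNReal.mul_ne_top (ENNReal.rpow_ne_top_of_nonneg (by linarith) (hbt j)) hIt)
      (hA_le j)
  have hL_fin : ∀ j, L j ≠ ∞ := by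
    intro j
    exact ne_top_of_le_ne_top
      (ENNReal.mul_ne_top ENNReal.ofReal_ne_top
        (ENNReal.rpow_ne_top_of_nonneg hq0.le (hA_fin j)))
      (hhard j)
  -- integrability of |μ|^q on each ball
  have haesm : ∀ j, AEStronglyMeasurable (fun x => |μ x| ^ q)
      (volume.restrict (B j)) := by
    intro j
    have h1 : AEMeasurable (fun x => |μ x|) (volume.restrict (B j)) :=
      _root_.continuous_abs.measurable.comp_aemeasurable
        (hloc.aestronglyMeasurable.aemeasurable.restrict)
    exact (h1.pow aemeasurable_const).aestronglyMeasurable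
  have hintg : ∀ j, IntegrableOn (fun x => |μ x| ^ q) (B j) volume := by
    intro j
    refine ⟨haesm j, ?_⟩
    rw [hasFiniteIntegral_def]
    have heq : ∀ x : EuclideanSpace ℝ (Fin n),
        (‖|μ x| ^ q‖₊ : ℝ≥0∞) = ENNReal.ofReal (|μ x| ^ q) :=
      fun x => Real.enorm_eq_ofReal (by positivity)
    calc ∫⁻ x in B j, (‖|μ x| ^ q‖₊ : ℝ≥0∞)
        = L j := lintegral_congr heq
      _ < ∞ := lt_top_iff_ne_top.mpr (hL_fin j)
  -- the terms
  set T : ℕ → ℝ≥0∞ :=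
    fun j => aa δ r j * ((bb δ r n ω j)⁻¹ * L j) ^ (1/q) with hTdef
  have hterm : ∀ j : ℕ, δ ^ j * r *
      (⨍ x in Metric.ball x₀ (δ ^ j * r), |μ x| ^ q) ^ (1/q) = (T j).toReal := by
    intro j
    have havg : ⨍ x in B j, |μ x| ^ q = ((bb δ r n ω j)⁻¹ * L j).toReal := by
      rw [setAverage_eq, integral_eq_lintegral_of_nonneg_ae
        (Filter.Eventually.of_forall fun x => by positivity) (haesm j)]
      rw [smul_eq_mul, ENNReal.toReal_mul, ENNReal.toReal_inv, measureReal_def, hbmeasure j]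
    rw [hTdef]
    show δ ^ j * r * (⨍ x in B j, |μ x| ^ q) ^ (1/q)
      = (aa δ r j * ((bb δ r n ω j)⁻¹ * L j) ^ (1/q)).toReal
    rw [havg, ENNReal.toReal_rpow, ENNReal.toReal_mul, aa,
      ENNReal.toReal_ofReal (hρ j).le]
  have hT_fin : ∀ j, T j ≠ ∞ := by
    intro j
    exact ENNReal.mul_ne_top (hat j)
      (ENNReal.rpow_ne_top_of_nonneg (by positivity)
        (ENNReal.mul_ne_top (ENNReal.inv_ne_top.mpr (hb0 j)) (hL_fin j)))
  -- main chain
  have hchain : ∑' j, T j ≤ K * I := by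
    have step1 : ∀ j : ℕ, T j ≤ (ENNReal.ofReal q) ^ (1/q) *
        (aa δ r j * ((bb δ r n ω j)⁻¹) ^ (1/q) * A j) := by
      intro j
      have h1 : ((bb δ r n ω j)⁻¹ * L j) ^ (1/q)
          ≤ ((bb δ r n ω j)⁻¹ * (ENNReal.ofReal q * A j ^ q)) ^ (1/q) :=
        ENNReal.rpow_le_rpow (mul_le_mul_right (hhard j) _) (by positivity)
      have h2 : ((bb δ r n ω j)⁻¹ * (ENNReal.ofReal q * A j ^ q)) ^ (1/q)
          = ((bb δ r n ω j)⁻¹) ^ (1/q) * ((ENNReal.ofReal q) ^ (1/q) * A j) := by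
        rw [ENNReal.mul_rpow_of_nonneg _ _ (by positivity : (0:ℝ) ≤ 1/q),
          ENNReal.mul_rpow_of_nonneg _ _ (by positivity : (0:ℝ) ≤ 1/q)]
        congr 1
        congr 1
        rw [← ENNReal.rpow_mul, mul_one_div, div_self hq0.ne', ENNReal.rpow_one]
      calc T j ≤ aa δ r j *
            (((bb δ r n ω j)⁻¹) ^ (1/q) * ((ENNReal.ofReal q) ^ (1/q) * A j)) := by
            rw [hTdef]
            exact mul_le_mul_right (le_of_le_of_eq h1 h2) _
        _ = (ENNReal.ofReal q) ^ (1/q) *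
            (aa δ r j * ((bb δ r n ω j)⁻¹) ^ (1/q) * A j) := by ring
    have step2 : ∀ j : ℕ, aa δ r j * ((bb δ r n ω j)⁻¹) ^ (1/q) * A j
        = ∫⁻ t in Set.Ioi (0:ℝ), aa δ r j * ((bb δ r n ω j)⁻¹) ^ (1/q) *
            (min (m t) (bb δ r n ω j)) ^ (1/q) := by
      intro j
      rw [hAdef]
      rw [← lintegral_const_mul' _ _
        (ENNReal.mul_ne_top (hat j)
          (ENNReal.rpow_ne_top_of_nonneg (by positivity)
            (ENNReal.inv_ne_top.mpr (hb0 j))))]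
    calc ∑' j, T j
        ≤ ∑' j, (ENNReal.ofReal q) ^ (1/q) *
            (aa δ r j * ((bb δ r n ω j)⁻¹) ^ (1/q) * A j) :=
          ENNReal.tsum_le_tsum step1
      _ = (ENNReal.ofReal q) ^ (1/q) *
            ∑' j, (aa δ r j * ((bb δ r n ω j)⁻¹) ^ (1/q) * A j) :=
          ENNReal.tsum_mul_left
      _ = (ENNReal.ofReal q) ^ (1/q) *
            ∑' j, ∫⁻ t in Set.Ioi (0:ℝ), aa δ r j * ((bb δ r n ω j)⁻¹) ^ (1/q) *
              (min (m t) (bb δ r n ω j)) ^ (1/q) := by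
          rw [tsum_congr step2]
      _ = (ENNReal.ofReal q) ^ (1/q) *
            ∫⁻ t in Set.Ioi (0:ℝ), ∑' j, aa δ r j * ((bb δ r n ω j)⁻¹) ^ (1/q) *
              (min (m t) (bb δ r n ω j)) ^ (1/q) := by
          congr 1
          rw [← lintegral_tsum]
          intro j
          exact (((hmin_meas j).pow_const _).const_mul _).aemeasurable
      _ ≤ (ENNReal.ofReal q) ^ (1/q) *
            ∫⁻ t in Set.Ioi (0:ℝ), C * (ω⁻¹) ^ (1/(n:ℝ)) * m t ^ (1/(n:ℝ)) := by
          refine mul_le_mul_right (lintegral_mono fun t => ?_) _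
          exact seriesB hn hq1 hqn hδ0 hδ1 hr hω0 hωt (m t)
      _ = K * I := by
          rw [lintegral_const_mul' _ _
            (ENNReal.mul_ne_top hCt hWt), hKdef, hIdef]
          ring
  -- conclusion
  have hO : 0 ≤ ∫ t in Set.Ioi (0:ℝ), (m t).toReal ^ (1/(n:ℝ)) :=
    integral_nonneg fun t => by positivity
  calc ∑' j : ℕ, δ ^ j * r *
        (⨍ x in Metric.ball x₀ (δ ^ j * r), |μ x| ^ q) ^ (1/q)
      = ∑' j : ℕ, (T j).toReal := tsum_congr hterm
    _ = (∑' j, T j).toReal := (ENNReal.tsum_toReal_eq hT_fin).symm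
    _ ≤ (K * I).toReal :=
        ENNReal.toReal_mono (ENNReal.mul_ne_top hKt hIt) hchain
    _ = K.toReal * I.toReal := ENNReal.toReal_mul
    _ = K.toReal * ∫ t in Set.Ioi (0:ℝ),
          (volume {x | t < |μ x|}).toReal ^ (1/(n:ℝ)) := by
        rw [hIval, ENNReal.toReal_ofReal hO]
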